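/- The expected improvement α(m, s) = (T − m)Φ((T − m)/s) + s φ((T − m)/s), as a function of predictive mean m ∈ ℝ and standard deviation s > 0, is monotonically increasing in s and monotonically decreasing in m. -/

import Mathlib

open MeasureTheory

/-- Standard normal density. -/
noncomputable def stdNormalPDF (z : ℝ) : ℝ :=
  (Real.sqrt (2 * Real.pi))⁻¹ * Real.exp (-z ^ 2 / 2)

/-- Standard normal CDF. -/
noncomputable def stdNormalCDF (z : ℝ) : ℝ :=
  ∫ t in Set.Iic z, stdNormalPDF t

/-- Expected improvement as a function of predictive mean and standard
deviation. -/
noncomputable def EI (T m s : ℝ) : ℝ :=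
  (T - m) * stdNormalCDF ((T - m) / s) + s * stdNormalPDF ((T - m) / s)

lemma stdNormalPDF_pos (z : ℝ) : 0 < stdNormalPDF z := by
  have h : (0:ℝ) < Real.sqrt (2 * Real.pi) := Real.sqrt_pos.2 (by positivity)
  exact mul_pos (inv_pos.2 h) (Real.exp_pos _)

lemma stdNormalPDF_continuous : Continuous stdNormalPDF := by
  unfold stdNormalPDF
  fun_prop

lemma stdNormalPDF_integrable : Integrable stdNormalPDF := by
  have h : Integrable (fun z : ℝ => Real.exp (-(1/2) * z ^ 2)) :=
    integrable_exp_neg_mul_sq (by norm_num)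
  have := h.const_mul (Real.sqrt (2 * Real.pi))⁻¹
  refine this.congr (Filter.Eventually.of_forall fun z => ?_)
  unfold stdNormalPDF
  ring_nf

lemma stdNormalCDF_pos (z : ℝ) : 0 < stdNormalCDF z := by
  rw [stdNormalCDF,
    setIntegral_pos_iff_support_of_nonneg_ae
      (Filter.Eventually.of_forall fun x => (stdNormalPDF_pos x).le)
      (stdNormalPDF_integrable.integrableOn)]
  have : Function.support stdNormalPDF = Set.univ := by
    ext x; simp [Function.support, (stdNormalPDF_pos x).ne']
  rw [this, Set.univ_inter]
  simp [Real.volume_Iic]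

lemma stdNormalCDF_hasDerivAt (z : ℝ) :
    HasDerivAt stdNormalCDF (stdNormalPDF z) z := by
  have heq : ∀ x : ℝ, stdNormalCDF x = stdNormalCDF 0 + ∫ t in (0:ℝ)..x, stdNormalPDF t := by
    intro x
    rw [← intervalIntegral.integral_Iic_sub_Iic
      stdNormalPDF_integrable.integrableOn stdNormalPDF_integrable.integrableOn]
    unfold stdNormalCDF; ring
  have h : HasDerivAt (fun x => stdNormalCDF 0 + ∫ t in (0:ℝ)..x, stdNormalPDF t)
      (stdNormalPDF z) z := by
    have := intervalIntegral.integral_hasDerivAt_right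
      (stdNormalPDF_integrable.intervalIntegrable (a := 0) (b := z))
      (stdNormalPDF_continuous.stronglyMeasurable.stronglyMeasurableAtFilter)
      stdNormalPDF_continuous.continuousAt
    simpa using (this.const_add (stdNormalCDF 0))
  exact h.congr_of_eventuallyEq (Filter.Eventually.of_forall fun x => (heq x))

lemma stdNormalPDF_hasDerivAt (z : ℝ) :
    HasDerivAt stdNormalPDF (-z * stdNormalPDF z) z := by
  have h1 : HasDerivAt (fun x : ℝ => -x ^ 2 / 2) (-z) z := by
    have : HasDerivAt (fun x : ℝ => -x ^ 2 / 2) (-(2 * z ^ 1) / 2) z := by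
      exact (((hasDerivAt_pow 2 z).neg).div_const 2)
    convert this using 1
    ring
  have h2 : HasDerivAt (fun x : ℝ => Real.exp (-x ^ 2 / 2))
      (Real.exp (-z ^ 2 / 2) * (-z)) z := (Real.hasDerivAt_exp _).comp z h1
  have := h2.const_mul (Real.sqrt (2 * Real.pi))⁻¹
  unfold stdNormalPDF
  exact this.congr_deriv (by ring)

lemma EI_hasDerivAt_s (T m s : ℝ) (hs : 0 < s) :
    HasDerivAt (fun s' => EI T m s') (stdNormalPDF ((T - m) / s)) s := by
  set c := T - m with hc
  set u := c / s with hu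
  have hsne : s ≠ 0 := hs.ne'
  have hdu : HasDerivAt (fun s' : ℝ => c / s') (-c / s ^ 2) s := by
    have := (hasDerivAt_inv hsne).const_mul c
    simpa [div_eq_mul_inv, neg_div, mul_div_assoc] using this
  have hΦ : HasDerivAt (fun s' : ℝ => stdNormalCDF (c / s'))
      (stdNormalPDF u * (-c / s ^ 2)) s := by
    have := (stdNormalCDF_hasDerivAt u).comp s hdu; exact this
  have hφ : HasDerivAt (fun s' : ℝ => stdNormalPDF (c / s'))
      ((-u * stdNormalPDF u) * (-c / s ^ 2)) s := by
    have := (stdNormalPDF_hasDerivAt u).comp s hdu; exact this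
  have h : HasDerivAt (fun s' => EI T m s')
      (c * (stdNormalPDF u * (-c / s ^ 2)) +
        (1 * stdNormalPDF (c / s) + s * ((-u * stdNormalPDF u) * (-c / s ^ 2)))) s := by
    exact (hΦ.const_mul c).add ((hasDerivAt_id s).mul hφ)
  convert h using 1
  simp only [hu]
  field_simp
  ring

lemma EI_hasDerivAt_m (T m s : ℝ) (hs : 0 < s) :
    HasDerivAt (fun m' => EI T m' s) (-(stdNormalCDF ((T - m) / s))) m := by
  have hsne : s ≠ 0 := hs.ne'
  set u := (T - m) / s with hu
  have hdc : HasDerivAt (fun m' : ℝ => T - m') (-1) m := by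
    simpa using (hasDerivAt_id m).const_sub T
  have hdu : HasDerivAt (fun m' : ℝ => (T - m') / s) (-1 / s) m := hdc.div_const s
  have hΦ : HasDerivAt (fun m' : ℝ => stdNormalCDF ((T - m') / s))
      (stdNormalPDF u * (-1 / s)) m := by
    have := (stdNormalCDF_hasDerivAt u).comp m hdu; exact this
  have hφ : HasDerivAt (fun m' : ℝ => stdNormalPDF ((T - m') / s))
      ((-u * stdNormalPDF u) * (-1 / s)) m := by
    have := (stdNormalPDF_hasDerivAt u).comp m hdu; exact this
  have h : HasDerivAt (fun m' => EI T m' s)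
      ((-1) * stdNormalCDF u + (T - m) * (stdNormalPDF u * (-1 / s)) +
        s * ((-u * stdNormalPDF u) * (-1 / s))) m := by
    exact (hdc.mul hΦ).add (hφ.const_mul s)
  convert h using 1
  simp only [hu]
  field_simp
  ring

theorem EI_monotone (T : ℝ) :
    (∀ m : ℝ, ∀ s : ℝ, 0 < s →
      HasDerivAt (fun s' => EI T m s') (stdNormalPDF ((T - m) / s)) s ∧
        0 < stdNormalPDF ((T - m) / s)) ∧
    (∀ m : ℝ, ∀ s : ℝ, 0 < s →
      HasDerivAt (fun m' => EI T m' s) (-(stdNormalCDF ((T - m) / s))) m ∧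
        stdNormalCDF ((T - m) / s) > 0) ∧
    (∀ m : ℝ, StrictMonoOn (fun s => EI T m s) (Set.Ioi (0 : ℝ))) ∧
    (∀ s : ℝ, 0 < s → StrictAnti (fun m => EI T m s)) := by
  refine ⟨fun m s hs => ⟨EI_hasDerivAt_s T m s hs, stdNormalPDF_pos _⟩,
    fun m s hs => ⟨EI_hasDerivAt_m T m s hs, stdNormalCDF_pos _⟩, ?_, ?_⟩
  · intro m
    apply strictMonoOn_of_deriv_pos (convex_Ioi 0)
    · intro x hx
      exact (EI_hasDerivAt_s T m x hx).continuousAt.continuousWithinAt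
    · intro x hx
      rw [interior_Ioi] at hx
      rw [(EI_hasDerivAt_s T m x hx).deriv]
      exact stdNormalPDF_pos _
  · intro s hs
    apply strictAnti_of_deriv_neg
    intro x
    rw [(EI_hasDerivAt_m T x s hs).deriv]
    simpa using stdNormalCDF_pos ((T - x) / s)
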